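/- Let k be a nonzero commutative ring and V a group such that the group algebra k[V] is isomorphic as a k-algebra to a product k^E of copies of k indexed by some set E. Then V is commutative and finite. -/

import Mathlib

theorem stmt_11 {k : Type} [CommRing k] [Nontrivial k] {V : Type} [Group V]
    (h : ∃ E : Type, Nonempty (MonoidAlgebra k V ≃ₐ[k] (E → k))) :
    (∀ a b : V, a * b = b * a) ∧ Finite V := by
  obtain ⟨E, ⟨φ⟩⟩ := h
  classical
  have hcomm : ∀ x y : MonoidAlgebra k V, x * y = y * x := by
    intro x y
    apply φ.injective
    rw [map_mul, map_mul, mul_comm]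
  constructor
  · intro a b
    apply MonoidAlgebra.of_injective (R := k)
    rw [map_mul, map_mul, hcomm]
  · -- E is nonempty
    haveI : Nontrivial (E → k) := φ.symm.toEquiv.nontrivial
    haveI hE : Nonempty E := by
      by_contra hne
      rw [not_nonempty_iff] at hne
      exact one_ne_zero (Subsingleton.elim (1 : E → k) 0)
    obtain ⟨e⟩ := hE
    set x : MonoidAlgebra k V := φ.symm (Pi.single e 1) with hx
    have hx0 : x ≠ 0 := by
      intro h0
      have : (Pi.single e 1 : E → k) = 0 := by
        have := congrArg φ h0
        simpa [hx] using this
      have := congrFun this e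
      simp at this
    obtain ⟨s, hs⟩ := Finsupp.support_nonempty_iff.mpr (mt MonoidAlgebra.coeff_eq_zero.mp hx0)
    have hs' : x.coeff s ≠ 0 := Finsupp.mem_support_iff.mp hs
    have key : ∀ g : V, MonoidAlgebra.single g (1 : k) * x
        = (φ (MonoidAlgebra.single g 1) e) • x := by
      intro g
      apply φ.injective
      rw [map_mul, map_smul]
      rw [show φ x = Pi.single e 1 from φ.apply_symm_apply _]
      funext a
      by_cases ha : a = e
      · subst ha
        simp [Pi.single_apply]
      · simp [Pi.single_apply, ha]
    have hmem : ∀ g : V, g * s ∈ x.coeff.support := by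
      intro g
      rw [Finsupp.mem_support_iff]
      intro h0
      have h1 : (MonoidAlgebra.single g (1 : k) * x).coeff (g * s)
          = (φ (MonoidAlgebra.single g 1) e • x).coeff (g * s) := by rw [key g]
      have h2 : (MonoidAlgebra.single g (1 : k) * x).coeff (g * s) = x.coeff s := by
        rw [MonoidAlgebra.coeff_single_mul_apply]
        simp
      rw [h2] at h1
      apply hs'
      rw [h1, MonoidAlgebra.coeff_smul, Finsupp.smul_apply, h0, smul_zero]
    exact Finite.of_injective (fun g : V => (⟨g * s, hmem g⟩ : x.coeff.support))
      (fun a b hab => mul_right_cancel (b := s)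
        (by simpa using congrArg Subtype.val hab))
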